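/- Let σ ∈ S_n be a permutation and C a cycle of σ of length ℓ ≥ 3 (as a cyclic orbit), and let σ' be the permutation obtained from σ by replacing C with its inverse cycle C^{-1} (reversing the cycle) and agreeing with σ elsewhere. Then σ' ≠ σ, (σ')' = σ, and if A is a symmetric matrix then ∏_i A(i,σ(i)) = ∏_i A(i,σ'(i)). -/

import Mathlib

/-- Reversing a cycle of length at least three in a permutation: if `c` is a cycle of
`σ` (a factor of its cycle decomposition) with support of size at least `3`, then the
permutation `σ' = σ * c⁻¹ * c⁻¹` (which replaces the cycle `c` of `σ` by its inverse)
is distinct from `σ`, reversing it again recovers `σ`, and for any symmetric matrix `A`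
the diagonal products of `σ` and `σ'` coincide. -/
theorem reverse_cycle_of_perm {R : Type*} [CommRing R] {n : ℕ}
    (A : Matrix (Fin n) (Fin n) R) (hsym : A.IsSymm)
    (σ c : Equiv.Perm (Fin n)) (hc : c ∈ σ.cycleFactorsFinset)
    (hlen : 3 ≤ c.support.card) :
    σ * c⁻¹ * c⁻¹ ≠ σ ∧
    (σ * c⁻¹ * c⁻¹) * c * c = σ ∧
    ∏ i : Fin n, A i (σ i) = ∏ i : Fin n, A i ((σ * c⁻¹ * c⁻¹) i) := by
  obtain ⟨hcyc, hagree⟩ := (Equiv.Perm.mem_cycleFactorsFinset_iff).mp hc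
  refine ⟨?_, by group, ?_⟩
  · intro h
    have h2 : c ^ 2 = 1 := by
      have h' := congrArg (fun x => σ⁻¹ * x) h
      simp only [← mul_assoc, inv_mul_cancel, one_mul] at h'
      have h'' : (c⁻¹ * c⁻¹)⁻¹ = 1 := by rw [h']; simp
      simpa [sq, mul_inv_rev] using h''
    have hord : orderOf c = c.support.card := hcyc.orderOf
    have hdvd : orderOf c ∣ 2 := orderOf_dvd_of_pow_eq_one h2
    have := Nat.le_of_dvd (by norm_num) hdvd
    omega
  · rw [← Equiv.prod_comp c (fun i => A i ((σ * c⁻¹ * c⁻¹) i))]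
    apply Finset.prod_congr rfl
    intro i _
    by_cases hi : i ∈ c.support
    · have hci : c i ∈ c.support := Equiv.Perm.apply_mem_support.mpr hi
      have hinv : c⁻¹ i ∈ c.support := by
        rw [← Equiv.Perm.support_inv c] at hi ⊢
        exact Equiv.Perm.apply_mem_support.mpr hi
      have h1 : (σ * c⁻¹ * c⁻¹) (c i) = i := by
        simp only [Equiv.Perm.mul_apply, show c⁻¹ (c i) = i from Equiv.symm_apply_apply c i]
        rw [← hagree _ hinv]
        simp
      rw [h1, ← hagree _ hi]
      exact hsym.apply (c i) i
    · have hfix : c i = i := Equiv.Perm.notMem_support.mp hi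
      have hfixinv : c⁻¹ i = i := by
        rw [← hfix]; exact hfix.symm ▸ (Equiv.symm_apply_apply c i : c⁻¹ (c i) = i)
      simp only [Equiv.Perm.mul_apply, hfix, hfixinv]
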